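/- Let σ = (σ_k)_{k≥1} be a nonincreasing nonnegative real sequence satisfying σ_k ≤ C e^{−c k^β} for all k ≥ 1, with constants C, c, β > 0. Then for all α with 0 < α < C one has r_α(σ) ≤ (c^{−1} ln(C α^{−1}))^{1/β}, and there exists a constant K > 0 depending only on C, c, β such that for all α ∈ (0, 1], τ_α(σ) ≤ K (1 + |ln α|)^{1/(2β)} α. -/

import Mathlib

/-- `r_δ(σ)`: the number of entries of `σ` exceeding `δ`. -/
noncomputable def rCount (σ : ℕ → ℝ) (δ : ℝ) : ℕ := {k : ℕ | δ < σ k}.ncard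

/-- `τ_δ(σ)`: the ℓ²-norm of the tail of `σ` after the first `r_δ(σ)` entries. -/
noncomputable def tauTail (σ : ℕ → ℝ) (δ : ℝ) : ℝ :=
  Real.sqrt (∑' k : ℕ, if rCount σ δ ≤ k then σ k ^ 2 else 0)

open Filter Asymptotics Real in
private lemma summable_exp_aux {c β : ℝ} (hc : 0 < c) (hβ : 0 < β) :
    Summable (fun k : ℕ => Real.exp (-c * ((k : ℝ) + 1) ^ β)) := by
  have h1 : (fun x : ℝ => Real.exp (-c * x)) =o[atTop] fun x : ℝ => x ^ (-2 / β) :=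
    isLittleO_exp_neg_mul_rpow_atTop hc _
  have h2 : Tendsto (fun k : ℕ => ((k : ℝ) + 1) ^ β) atTop atTop :=
    (tendsto_rpow_atTop hβ).comp
      (tendsto_atTop_add_const_right atTop 1 tendsto_natCast_atTop_atTop)
  have h3 := h1.comp_tendsto h2
  have h5 : Summable (fun k : ℕ => ((k : ℝ) + 1) ^ (-2 : ℝ)) := by
    have := (summable_nat_rpow (p := (-2 : ℝ))).mpr (by norm_num)
    have := (summable_nat_add_iff 1).mpr this
    refine this.congr fun k => ?_
    push_cast; ring_nf
  refine summable_of_isBigO_nat h5 (h3.isBigO.congr (fun k => rfl) fun k => ?_)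
  show (((k : ℝ) + 1) ^ β) ^ (-2 / β) = ((k : ℝ) + 1) ^ (-2 : ℝ)
  rw [← Real.rpow_mul (by positivity)]
  congr 1; field_simp

/-- If `α < σ k` then `k+1` is below the threshold. -/
private lemma mem_lt_aux {C c β α : ℝ} (hC : 0 < C) (hc : 0 < c) (hβ : 0 < β) (hα : 0 < α)
    {σ : ℕ → ℝ} (hbd : ∀ k : ℕ, σ k ≤ C * Real.exp (-c * ((k : ℝ) + 1) ^ β)) :
    ∀ k : ℕ, α < σ k → ((k : ℝ) + 1) < (c⁻¹ * Real.log (C * α⁻¹)) ^ (1 / β) := by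
  intro k hk
  have h1 : α < C * Real.exp (-c * ((k : ℝ) + 1) ^ β) := lt_of_lt_of_le hk (hbd k)
  have h2 : α / C < Real.exp (-c * ((k : ℝ) + 1) ^ β) := by
    rw [div_lt_iff₀ hC]; linarith [h1, mul_comm C (Real.exp (-c * ((k : ℝ) + 1) ^ β))]
  have h3 : Real.log (α / C) < -c * ((k : ℝ) + 1) ^ β := by
    have := Real.log_lt_log (by positivity : (0 : ℝ) < α / C) h2
    rwa [Real.log_exp] at this
  have hlog : Real.log (C * α⁻¹) = Real.log C - Real.log α := by
    rw [Real.log_mul hC.ne' (by positivity), Real.log_inv]; ring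
  have h4 : c * ((k : ℝ) + 1) ^ β < Real.log (C * α⁻¹) := by
    rw [Real.log_div hα.ne' hC.ne'] at h3
    rw [hlog]; linarith
  have h5 : ((k : ℝ) + 1) ^ β < c⁻¹ * Real.log (C * α⁻¹) := by
    rw [inv_mul_eq_div, lt_div_iff₀ hc]; linarith [h4, mul_comm c (((k : ℝ) + 1) ^ β)]
  have h6 := Real.rpow_lt_rpow (by positivity : (0 : ℝ) ≤ ((k : ℝ) + 1) ^ β) h5
    (by positivity : (0 : ℝ) < 1 / β)
  calc (k : ℝ) + 1 = (((k : ℝ) + 1) ^ β) ^ (1 / β) := by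
        rw [← Real.rpow_mul (by positivity), mul_one_div, div_self hβ.ne', Real.rpow_one]
    _ < (c⁻¹ * Real.log (C * α⁻¹)) ^ (1 / β) := h6

/-- The exceedance set is contained in a finite range. -/
private lemma subset_range_aux {C c β α : ℝ} (hC : 0 < C) (hc : 0 < c) (hβ : 0 < β) (hα : 0 < α)
    {σ : ℕ → ℝ} (hbd : ∀ k : ℕ, σ k ≤ C * Real.exp (-c * ((k : ℝ) + 1) ^ β)) :
    {k : ℕ | α < σ k} ⊆
      ↑(Finset.range (Nat.floor ((c⁻¹ * Real.log (C * α⁻¹)) ^ (1 / β)))) := by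
  intro k hk
  simp only [Finset.coe_range, Set.mem_Iio]
  have h := mem_lt_aux hC hc hβ hα hbd k hk
  have : k + 1 ≤ Nat.floor ((c⁻¹ * Real.log (C * α⁻¹)) ^ (1 / β)) := by
    apply Nat.le_floor
    push_cast
    linarith
  omega

private lemma sigma_le_of_rCount_le {α : ℝ} {σ : ℕ → ℝ} (hmono : Antitone σ)
    (hfin : {k : ℕ | α < σ k}.Finite) :
    ∀ k : ℕ, rCount σ α ≤ k → σ k ≤ α := by
  intro k hk
  by_contra h
  push_neg at h
  have hsub : ↑(Finset.range (k + 1)) ⊆ {j : ℕ | α < σ j} := by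
    intro j hj
    simp only [Finset.coe_range, Set.mem_Iio] at hj
    exact lt_of_lt_of_le h (hmono (Nat.lt_succ_iff.mp hj))
  have h2 := Set.ncard_le_ncard hsub hfin
  rw [Set.ncard_coe_finset, Finset.card_range] at h2
  rw [rCount] at hk
  omega

/-- **Threshold bounds under exponential-type decay.** If the nonincreasing nonnegative
sequence `σ` satisfies `σ_k ≤ C e^{-c k^β}` for `k ≥ 1` (written 0-indexed below), then for
`0 < α < C` one has `r_α(σ) ≤ (c⁻¹ ln(C α⁻¹))^{1/β}`, and there is a constant `K > 0`
depending only on `C, c, β` such that for all `α ∈ (0,1]`,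
`τ_α(σ) ≤ K (1 + |ln α|)^{1/(2β)} α`. -/
theorem exp_decay_threshold_bounds (C c β : ℝ) (hC : 0 < C) (hc : 0 < c) (hβ : 0 < β) :
    (∀ (σ : ℕ → ℝ), Antitone σ → (∀ k, 0 ≤ σ k) →
        (∀ k : ℕ, σ k ≤ C * Real.exp (-c * ((k : ℝ) + 1) ^ β)) →
        ∀ α : ℝ, 0 < α → α < C →
          (rCount σ α : ℝ) ≤ (c⁻¹ * Real.log (C * α⁻¹)) ^ (1/β))
    ∧ ∃ K : ℝ, 0 < K ∧
        ∀ (σ : ℕ → ℝ), Antitone σ → (∀ k, 0 ≤ σ k) →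
          (∀ k : ℕ, σ k ≤ C * Real.exp (-c * ((k : ℝ) + 1) ^ β)) →
          ∀ α : ℝ, 0 < α → α ≤ 1 →
            tauTail σ α ≤ K * (1 + |Real.log α|) ^ (1/(2*β)) * α := by
  constructor
  · -- Part 1
    intro σ hmono hpos hbd α hα hαC
    have hsub := subset_range_aux hC hc hβ hα hbd
    have h := Set.ncard_le_ncard hsub
      (Finset.range (Nat.floor ((c⁻¹ * Real.log (C * α⁻¹)) ^ (1 / β)))).finite_toSet
    rw [Set.ncard_coe_finset, Finset.card_range] at h
    have hR0 : 0 ≤ (c⁻¹ * Real.log (C * α⁻¹)) ^ (1 / β) := by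
      apply Real.rpow_nonneg
      have h1 : 1 < C * α⁻¹ := by
        rw [← div_eq_mul_inv, lt_div_iff₀ hα, one_mul]; exact hαC
      have := Real.log_nonneg h1.le
      positivity
    rw [rCount]
    calc ({k : ℕ | α < σ k}.ncard : ℝ)
        ≤ (Nat.floor ((c⁻¹ * Real.log (C * α⁻¹)) ^ (1 / β)) : ℝ) := by exact_mod_cast h
      _ ≤ (c⁻¹ * Real.log (C * α⁻¹)) ^ (1 / β) := Nat.floor_le hR0
  · -- Part 2
    set S : ℝ := ∑' k : ℕ, Real.exp (-c * ((k : ℝ) + 1) ^ β) with hS_def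
    have hS : Summable (fun k : ℕ => Real.exp (-c * ((k : ℝ) + 1) ^ β)) :=
      summable_exp_aux hc hβ
    have hS0 : 0 ≤ S := tsum_nonneg (fun k => (Real.exp_pos _).le)
    set mC : ℝ := max (Real.log C) 0 with hmC_def
    have hmC0 : 0 ≤ mC := le_max_right _ _
    set A : ℝ := (2 / c * (1 + mC)) ^ (1 / β) with hA_def
    have hA0 : 0 ≤ A := Real.rpow_nonneg (by positivity) _
    refine ⟨Real.sqrt (A + 1 + S), Real.sqrt_pos.mpr (by linarith), ?_⟩
    intro σ hmono hpos hbd α hα hα1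
    -- finiteness of exceedance set
    have hfin : {k : ℕ | α < σ k}.Finite :=
      Set.Finite.subset (Finset.finite_toSet _) (subset_range_aux hC hc hβ hα hbd)
    have hrle := sigma_le_of_rCount_le hmono hfin
    -- the cut point N
    set L : ℝ := max (Real.log (C * α⁻¹)) 0 with hL_def
    have hL0 : 0 ≤ L := le_max_right _ _
    set T : ℝ := (2 / c * L) ^ (1 / β) with hT_def
    have hT0 : 0 ≤ T := Real.rpow_nonneg (by positivity) _
    set N : ℕ := Nat.floor T + 1 with hN_def
    have hTN : T < (N : ℝ) := by
      rw [hN_def]; push_cast; exact Nat.lt_floor_add_one T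
    -- key tail bound
    have hkey : ∀ k : ℕ, N ≤ k → C ^ 2 * Real.exp (-c * ((k : ℝ) + 1) ^ β) ≤ α ^ 2 := by
      intro k hk
      have hk1 : T ≤ (k : ℝ) + 1 := by
        have : (N : ℝ) ≤ (k : ℝ) := Nat.cast_le.mpr hk
        linarith
      have hTβ : T ^ β = 2 / c * L := by
        rw [hT_def, ← Real.rpow_mul (by positivity), one_div, inv_mul_cancel₀ hβ.ne',
          Real.rpow_one]
      have h2 : 2 * L ≤ c * ((k : ℝ) + 1) ^ β := by
        have hmono' := Real.rpow_le_rpow hT0 hk1 hβ.le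
        rw [hTβ] at hmono'
        have := mul_le_mul_of_nonneg_left hmono' hc.le
        calc 2 * L = c * (2 / c * L) := by field_simp
          _ ≤ c * ((k : ℝ) + 1) ^ β := this
      have hE : Real.exp (-c * ((k : ℝ) + 1) ^ β) ≤ Real.exp (-(2 * L)) :=
        Real.exp_le_exp.mpr (by linarith [h2])
      have hLexp : Real.exp (-L) ≤ α * C⁻¹ := by
        have h1 : Real.log (C * α⁻¹) ≤ L := le_max_left _ _
        have h2' : Real.exp (-L) ≤ Real.exp (-(Real.log (C * α⁻¹))) :=
          Real.exp_le_exp.mpr (by linarith)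
        have h3' : Real.exp (-(Real.log (C * α⁻¹))) = α * C⁻¹ := by
          rw [← Real.log_inv, Real.exp_log (by positivity)]
          rw [mul_inv, inv_inv]; ring
        linarith
      calc C ^ 2 * Real.exp (-c * ((k : ℝ) + 1) ^ β)
          ≤ C ^ 2 * Real.exp (-(2 * L)) := by
            exact mul_le_mul_of_nonneg_left hE (by positivity)
        _ = C ^ 2 * (Real.exp (-L)) ^ 2 := by
            rw [sq (Real.exp (-L)), ← Real.exp_add]; ring_nf
        _ ≤ C ^ 2 * (α * C⁻¹) ^ 2 := by
            exact mul_le_mul_of_nonneg_left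
              (pow_le_pow_left₀ (Real.exp_nonneg _) hLexp 2) (by positivity)
        _ = α ^ 2 := by field_simp
    -- termwise bound
    set f : ℕ → ℝ := fun k => if rCount σ α ≤ k then σ k ^ 2 else 0 with hf_def
    set g1 : ℕ → ℝ := fun k => if k < N then α ^ 2 else 0 with hg1_def
    set g2 : ℕ → ℝ := fun k => α ^ 2 * Real.exp (-c * ((k : ℝ) + 1) ^ β) with hg2_def
    have hf0 : ∀ k, 0 ≤ f k := by
      intro k; rw [hf_def]; dsimp only; split
      · positivity
      · exact le_rfl
    have hfg : ∀ k, f k ≤ g1 k + g2 k := by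
      intro k
      rw [hf_def, hg1_def, hg2_def]; dsimp only
      by_cases hr : rCount σ α ≤ k
      · rw [if_pos hr]
        by_cases hkN : k < N
        · rw [if_pos hkN]
          have h1 : σ k ≤ α := hrle k hr
          have h2 : σ k ^ 2 ≤ α ^ 2 := pow_le_pow_left₀ (hpos k) h1 2
          have : 0 ≤ α ^ 2 * Real.exp (-c * ((k : ℝ) + 1) ^ β) := by positivity
          linarith
        · rw [if_neg hkN]
          push_neg at hkN
          have h1 : σ k ^ 2 ≤ (C * Real.exp (-c * ((k : ℝ) + 1) ^ β)) ^ 2 :=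
            pow_le_pow_left₀ (hpos k) (hbd k) 2
          have h2 : (C * Real.exp (-c * ((k : ℝ) + 1) ^ β)) ^ 2
              = (C ^ 2 * Real.exp (-c * ((k : ℝ) + 1) ^ β))
                * Real.exp (-c * ((k : ℝ) + 1) ^ β) := by ring
          have h3 := mul_le_mul_of_nonneg_right (hkey k hkN) (Real.exp_nonneg
            (-c * ((k : ℝ) + 1) ^ β))
          linarith
      · rw [if_neg hr]
        have h1 : (0:ℝ) ≤ if k < N then α ^ 2 else 0 := by split <;> positivity
        have h2 : (0:ℝ) ≤ α ^ 2 * Real.exp (-c * ((k : ℝ) + 1) ^ β) := by positivity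
        linarith
    have hg1s : Summable g1 := by
      apply summable_of_ne_finset_zero (s := Finset.range N)
      intro k hk
      rw [hg1_def]; dsimp only
      rw [if_neg (by simpa using hk)]
    have hg2s : Summable g2 := hS.mul_left _
    have hfs : Summable f := Summable.of_nonneg_of_le hf0 hfg (hg1s.add hg2s)
    have htsum_g1 : ∑' k, g1 k = (N : ℝ) * α ^ 2 := by
      rw [tsum_eq_sum (s := Finset.range N) (fun k hk => if_neg (by simpa using hk)),
        Finset.sum_congr rfl (fun k hk => if_pos (Finset.mem_range.mp hk)),
        Finset.sum_const, Finset.card_range, nsmul_eq_mul]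
    have htsum_g2 : ∑' k, g2 k = α ^ 2 * S := by
      rw [hg2_def, hS_def]; exact tsum_mul_left
    have htsum_f : ∑' k, f k ≤ α ^ 2 * ((N : ℝ) + S) := by
      have h1 : ∑' k, f k ≤ ∑' k, (g1 k + g2 k) :=
        Summable.tsum_le_tsum hfg hfs (hg1s.add hg2s)
      rw [Summable.tsum_add hg1s hg2s, htsum_g1, htsum_g2] at h1
      linarith [h1]
    -- bound N + S
    set P : ℝ := (1 + |Real.log α|) ^ (1 / β) with hP_def
    have hP1 : 1 ≤ P := Real.one_le_rpow (by
      have := abs_nonneg (Real.log α); linarith) (by positivity)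
    have hP0 : 0 ≤ P := by linarith
    have hNS : (N : ℝ) + S ≤ (A + 1 + S) * P := by
      have hLle : L ≤ (1 + mC) * (1 + |Real.log α|) := by
        apply max_le
        · have hlogC : Real.log (C * α⁻¹) = Real.log C - Real.log α := by
            rw [Real.log_mul hC.ne' (by positivity), Real.log_inv]; ring
          have habs : |Real.log α| = -Real.log α :=
            abs_of_nonpos (Real.log_nonpos hα.le hα1)
          have h1 : Real.log C ≤ mC := le_max_left _ _
          have h2 := abs_nonneg (Real.log α)
          rw [hlogC]
          nlinarith
        · positivity
      have hTle : T ≤ A * P := by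
        have h1 : 2 / c * L ≤ 2 / c * (1 + mC) * (1 + |Real.log α|) := by
          have := mul_le_mul_of_nonneg_left hLle (by positivity : (0:ℝ) ≤ 2 / c)
          linarith [this, mul_assoc (2/c) (1+mC) (1 + |Real.log α|)]
        have h2 := Real.rpow_le_rpow (by positivity) h1 (by positivity : (0:ℝ) ≤ 1 / β)
        calc T = (2 / c * L) ^ (1 / β) := by rw [hT_def]
          _ ≤ (2 / c * (1 + mC) * (1 + |Real.log α|)) ^ (1 / β) := h2
          _ = A * P := by
              rw [hA_def, hP_def, ← Real.mul_rpow (by positivity) (by positivity)]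
      have hNle : (N : ℝ) ≤ T + 1 := by
        rw [hN_def]; push_cast
        linarith [Nat.floor_le hT0]
      nlinarith [hTle, hNle, hS0, hP1, hA0]
    -- assemble
    have hsq : (1 + |Real.log α|) ^ (1 / (2 * β)) = Real.sqrt P := by
      rw [hP_def, Real.sqrt_eq_rpow, ← Real.rpow_mul (by positivity)]
      congr 1
      field_simp
    rw [tauTail]
    calc Real.sqrt (∑' k : ℕ, if rCount σ α ≤ k then σ k ^ 2 else 0)
        ≤ Real.sqrt (α ^ 2 * ((A + 1 + S) * P)) := by
          apply Real.sqrt_le_sqrt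
          calc (∑' k : ℕ, if rCount σ α ≤ k then σ k ^ 2 else 0) = ∑' k, f k := by
                rw [hf_def]
            _ ≤ α ^ 2 * ((N : ℝ) + S) := htsum_f
            _ ≤ α ^ 2 * ((A + 1 + S) * P) :=
                mul_le_mul_of_nonneg_left hNS (by positivity)
      _ = α * (Real.sqrt (A + 1 + S) * Real.sqrt P) := by
          rw [Real.sqrt_mul (by positivity), Real.sqrt_sq hα.le,
            Real.sqrt_mul (by linarith)]
      _ = Real.sqrt (A + 1 + S) * (1 + |Real.log α|) ^ (1 / (2 * β)) * α := by
          rw [hsq]; ring
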